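/- Let M be a monoid and suppose a, b ∈ M are such that a ∉ bM and b ∉ aM. Consider the sequence of pointed M-sets Xₙ = X(M) (the set of principal right ideals with left multiplication action, distinguished point M = 1·M). Then this sequence does not have the Ramsey property: there is a 2-coloring of the partial semigroup ⟨(Xₙ)⟩ of located words over X(M) such that for every basic sequence (wᵢ) with the distinguished point occurring in each wᵢ, the words a(w₀)w₁ and b(w₀)w₁ receive different colors. -/
import Mathlib


/-- `X(M)`: the set of principal right ideals `cM` of `M`. -/
def PIdeal (M : Type*) [Monoid M] := {s : Set M // ∃ c : M, s = Set.range (c * ·)}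

/-- The left-translation action of `M` on `X(M)`: `x • (cM) = (xc)M`. -/
def actP {M : Type*} [Monoid M] (x : M) (s : PIdeal M) : PIdeal M :=
  ⟨(x * ·) '' s.1, by
    obtain ⟨c, hc⟩ := s.2
    refine ⟨x * c, ?_⟩
    rw [hc]
    ext y
    constructor
    · rintro ⟨z, ⟨m, rfl⟩, rfl⟩
      exact ⟨m, by simp [mul_assoc]⟩
    · rintro ⟨m, rfl⟩
      exact ⟨c * m, ⟨m, rfl⟩, by simp [mul_assoc]⟩⟩

/-- The distinguished point `M = 1·M` of `X(M)`. -/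
def ptP (M : Type*) [Monoid M] : PIdeal M := ⟨Set.range ((1 : M) * ·), ⟨1, rfl⟩⟩

private lemma image_range_aux {M : Type*} [Monoid M] (x c : M) :
    (x * ·) '' Set.range (c * ·) = Set.range ((x * c) * ·) := by
  ext y
  constructor
  · rintro ⟨z, ⟨m, rfl⟩, rfl⟩; exact ⟨m, by simp [mul_assoc]⟩
  · rintro ⟨m, rfl⟩; exact ⟨c * m, ⟨m, rfl⟩, by simp [mul_assoc]⟩

/-- If `b ∉ aM` then `a·s ≠ bM` for every principal right ideal `s`. -/
private lemma act_ne_aux {M : Type*} [Monoid M] (a b : M)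
    (hb : b ∉ Set.range (a * ·)) (s : PIdeal M) :
    actP a s ≠ actP b (ptP M) := by
  intro h
  obtain ⟨c, hc⟩ := s.2
  have h1 : (actP a s).1 = Set.range ((a * c) * ·) := by
    show (a * ·) '' s.1 = _
    rw [hc, image_range_aux]
  have h2 : (actP b (ptP M)).1 = Set.range ((b * 1) * ·) := by
    show (b * ·) '' (ptP M).1 = _
    exact image_range_aux b 1
  have hval := congrArg Subtype.val h
  rw [h1, h2] at hval
  have hbmem : b ∈ Set.range ((b * 1) * ·) := ⟨1, by simp⟩
  rw [← hval] at hbmem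
  obtain ⟨m, hm⟩ := hbmem
  exact hb ⟨c * m, by rw [← hm]; simp [mul_assoc]⟩

private lemma find?_append_of_some {α : Type*} (p : α → Bool) (l₁ l₂ : List α) (x : α)
    (h : l₁.find? p = some x) : (l₁ ++ l₂).find? p = some x := by
  induction l₁ with
  | nil => simp [List.find?] at h
  | cons y t ih =>
    rw [List.cons_append]
    by_cases hy : p y
    · simp only [List.find?_cons, hy] at h ⊢; exact h
    · simp only [List.find?_cons, hy] at h ⊢; exact ih h

/-- if `a ∉ bM` and `b ∉ aM`, the constant sequence of pointed
`M`-sets `Xₙ = X(M)` fails the Ramsey property: there is a `2`-coloring of the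
located words over `X(M)` such that, for every basic sequence `(wᵢ)` with the
distinguished point occurring in each `wᵢ`, the words `a(w₀)w₁` and `b(w₀)w₁`
get different colors.  Located words are encoded as lists of pairs
`(position, letter)` with strictly increasing positions. -/
theorem stmt_19 (M : Type*) [Monoid M] (a b : M)
    (ha : a ∉ Set.range (b * ·)) (hb : b ∉ Set.range (a * ·)) :
    ∃ color : List (ℕ × PIdeal M) → Bool,
      ∀ w : ℕ → List (ℕ × PIdeal M),
        (∀ i, w i ≠ [] ∧ (w i).Chain' (fun p q => p.1 < q.1)) →
        (∀ i j, i < j → ∀ p ∈ w i, ∀ q ∈ w j, p.1 < q.1) →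
        (∀ i, ∃ n : ℕ, (n, ptP M) ∈ w i) →
        color (((w 0).map (fun p => (p.1, actP a p.2))) ++ w 1) ≠
        color (((w 0).map (fun p => (p.1, actP b p.2))) ++ w 1) := by
  classical
  set aI := actP a (ptP M) with haI
  set bI := actP b (ptP M) with hbI
  have hab : aI ≠ bI := act_ne_aux a b hb (ptP M)
  set p : PIdeal M → Bool := fun s => decide (s = aI ∨ s = bI) with hp
  refine ⟨fun w => ((w.map Prod.snd).find? p).elim false (fun s => decide (s = aI)), ?_⟩
  intro w _ _ h3
  obtain ⟨n, hn⟩ := h3 0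
  -- the first block of the a-word
  have findA : (((w 0).map (fun q => ((q.1 : ℕ), actP a q.2))).map Prod.snd).find? p
      = some aI := by
    set L : List (PIdeal M) := ((w 0).map (fun q => ((q.1 : ℕ), actP a q.2))).map Prod.snd
      with hL
    have hLeq : L = (w 0).map (fun q => actP a q.2) := by
      simp [hL, List.map_map, Function.comp]
    have hmem : aI ∈ L := by
      rw [hLeq]
      exact List.mem_map.2 ⟨(n, ptP M), hn, rfl⟩
    have hsome : (L.find? p).isSome := by
      rw [List.find?_isSome]
      exact ⟨aI, hmem, by simp [hp]⟩
    obtain ⟨x, hx⟩ := Option.isSome_iff_exists.1 hsome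
    have hxL : x ∈ L := List.mem_of_find?_eq_some hx
    have hpx := List.find?_some hx
    rw [hp] at hpx
    have hx' : x = aI ∨ x = bI := of_decide_eq_true hpx
    rw [hLeq] at hxL
    obtain ⟨q, _, rfl⟩ := List.mem_map.1 hxL
    rcases hx' with h | h
    · rw [← h]; exact hx
    · exact absurd h (act_ne_aux a b hb q.2)
  have findB : (((w 0).map (fun q => ((q.1 : ℕ), actP b q.2))).map Prod.snd).find? p
      = some bI := by
    set L : List (PIdeal M) := ((w 0).map (fun q => ((q.1 : ℕ), actP b q.2))).map Prod.snd
      with hL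
    have hLeq : L = (w 0).map (fun q => actP b q.2) := by
      simp [hL, List.map_map, Function.comp]
    have hmem : bI ∈ L := by
      rw [hLeq]
      exact List.mem_map.2 ⟨(n, ptP M), hn, rfl⟩
    have hsome : (L.find? p).isSome := by
      rw [List.find?_isSome]
      exact ⟨bI, hmem, by simp [hp]⟩
    obtain ⟨x, hx⟩ := Option.isSome_iff_exists.1 hsome
    have hxL : x ∈ L := List.mem_of_find?_eq_some hx
    have hpx := List.find?_some hx
    rw [hp] at hpx
    have hx' : x = aI ∨ x = bI := of_decide_eq_true hpx
    rw [hLeq] at hxL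
    obtain ⟨q, _, rfl⟩ := List.mem_map.1 hxL
    rcases hx' with h | h
    · exact absurd h.symm (fun hh => act_ne_aux b a ha q.2 hh.symm)
    · rw [← h]; exact hx
  have eqA : ((((w 0).map (fun q => ((q.1 : ℕ), actP a q.2))) ++ w 1).map Prod.snd).find? p
      = some aI := by
    rw [List.map_append]
    exact find?_append_of_some p _ _ _ findA
  have eqB : ((((w 0).map (fun q => ((q.1 : ℕ), actP b q.2))) ++ w 1).map Prod.snd).find? p
      = some bI := by
    rw [List.map_append]
    exact find?_append_of_some p _ _ _ findB
  simp only [eqA, eqB, Option.elim]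
  simp [hab, Ne.symm hab]
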